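/- Let ρ and σ be density matrices on a finite-dimensional Hilbert space and let Λ be an operator with 0 ≤ Λ ≤ I. Then |√(Tr(Λρ)) − √(Tr(Λσ))| ≤ P(ρ,σ), where P(ρ,σ) = √(1 − F(ρ,σ)²) is the purified distance and F(ρ,σ) = ‖√ρ √σ‖₁ is the fidelity. -/

import Mathlib

open Matrix BigOperators Classical ComplexOrder

noncomputable section

variable {n : Type*} [Fintype n] [DecidableEq n]

/-- positive-semidefinite square root, extended by 0. -/
noncomputable def msqrt (A : Matrix n n ℂ) : Matrix n n ℂ :=
  if h : A.PosSemidef then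
    (h.1.eigenvectorUnitary : Matrix n n ℂ) *
      Matrix.diagonal ((↑) ∘ (fun x : ℝ => Real.sqrt x) ∘ h.1.eigenvalues) *
      (star (h.1.eigenvectorUnitary : Matrix n n ℂ))
  else 0

/-- trace norm ‖X‖₁ = Tr √(XᴴX). -/
noncomputable def traceNorm (X : Matrix n n ℂ) : ℝ :=
  (msqrt (Xᴴ * X)).trace.re

/-- fidelity F(ρ,σ) = ‖√ρ√σ‖₁. -/
noncomputable def fidelity (ρ σ : Matrix n n ℂ) : ℝ :=
  traceNorm (msqrt ρ * msqrt σ)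

/-- purified distance. -/
noncomputable def purifiedDist (ρ σ : Matrix n n ℂ) : ℝ :=
  Real.sqrt (1 - (fidelity ρ σ)^2)

def IsDensityMatrix (ρ : Matrix n n ℂ) : Prop := ρ.PosSemidef ∧ ρ.trace = 1

/-- max-relative entropy. -/
noncomputable def Dmax (ρ σ : Matrix n n ℂ) : ℝ :=
  sInf {l : ℝ | ((((2:ℝ)^l : ℝ) : ℂ) • σ - ρ).PosSemidef}

/-- smooth hypothesis testing divergence. -/
noncomputable def DH (ε : ℝ) (ρ τ : Matrix n n ℂ) : ℝ :=
  sSup {r : ℝ | ∃ P : Matrix n n ℂ, P.PosSemidef ∧ ((1 : Matrix n n ℂ) - P).PosSemidef ∧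
    1 - ε ≤ ((P * ρ).trace).re ∧ r = - Real.logb 2 ((P * τ).trace).re}

/-- functional calculus for hermitian matrices (0 otherwise). -/
noncomputable def hermCFC (f : ℝ → ℝ) (A : Matrix n n ℂ) : Matrix n n ℂ :=
  if h : A.IsHermitian then
    (Matrix.IsHermitian.eigenvectorUnitary h : Matrix n n ℂ) *
      Matrix.diagonal (fun i => (f (h.eigenvalues i) : ℂ)) *
      (star (Matrix.IsHermitian.eigenvectorUnitary h : Matrix n n ℂ))
  else 0

/-- von Neumann entropy (base 2). -/
noncomputable def vnEntropy (ρ : Matrix n n ℂ) : ℝ :=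
  if h : ρ.IsHermitian then -∑ i, (h.eigenvalues i) * Real.logb 2 (h.eigenvalues i) else 0

end


set_option linter.unusedSectionVars false
set_option maxHeartbeats 1000000

section aux
variable {n : Type*} [Fintype n] [DecidableEq n]

noncomputable def Matrix.PosSemidef.sqrt {A : Matrix n n ℂ} (h : A.PosSemidef) : Matrix n n ℂ :=
  (h.1.eigenvectorUnitary : Matrix n n ℂ) *
      Matrix.diagonal ((↑) ∘ (fun x : ℝ => Real.sqrt x) ∘ h.1.eigenvalues) *
      (star (h.1.eigenvectorUnitary : Matrix n n ℂ))

lemma Matrix.PosSemidef.posSemidef_sqrt {A : Matrix n n ℂ} (h : A.PosSemidef) :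
    h.sqrt.PosSemidef := by
  unfold Matrix.PosSemidef.sqrt
  have hd : (Matrix.diagonal ((↑) ∘ (fun x : ℝ => Real.sqrt x) ∘ h.1.eigenvalues) : Matrix n n ℂ).PosSemidef := by
    rw [posSemidef_diagonal_iff]
    intro i
    simp [Real.sqrt_nonneg]
  have := hd.mul_mul_conjTranspose_same (h.1.eigenvectorUnitary : Matrix n n ℂ)
  simpa [Matrix.star_eq_conjTranspose] using this

lemma Matrix.PosSemidef.sqrt_mul_self {A : Matrix n n ℂ} (h : A.PosSemidef) :
    h.sqrt * h.sqrt = A := by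
  unfold Matrix.PosSemidef.sqrt
  conv_rhs => rw [h.1.spectral_theorem]
  rw [Unitary.conjStarAlgAut_apply]
  have hU : (star (h.1.eigenvectorUnitary : Matrix n n ℂ)) * (h.1.eigenvectorUnitary : Matrix n n ℂ) = 1 :=
    Unitary.coe_star_mul_self _
  calc _ = (h.1.eigenvectorUnitary : Matrix n n ℂ) *
      (Matrix.diagonal ((↑) ∘ (fun x : ℝ => Real.sqrt x) ∘ h.1.eigenvalues) *
      ((star (h.1.eigenvectorUnitary : Matrix n n ℂ)) * (h.1.eigenvectorUnitary : Matrix n n ℂ)) *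
      Matrix.diagonal ((↑) ∘ (fun x : ℝ => Real.sqrt x) ∘ h.1.eigenvalues)) *
      (star (h.1.eigenvectorUnitary : Matrix n n ℂ)) := by simp only [Matrix.mul_assoc]
    _ = _ := by
      rw [hU, Matrix.mul_one, Matrix.diagonal_mul_diagonal]
      congr 3
      funext i
      simp only [Function.comp_apply]
      rw [← Complex.ofReal_mul, Real.mul_self_sqrt (h.eigenvalues_nonneg i)]
      rfl

lemma dot_star_self_re_nonneg (z : n → ℂ) : 0 ≤ (star z ⬝ᵥ z).re := by
  simp only [dotProduct, Pi.star_apply]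
  rw [Complex.re_sum]
  refine Finset.sum_nonneg fun i _ => ?_
  simpa [mul_comm, Complex.normSq_apply] using Complex.normSq_nonneg (z i)

lemma psd_trace_re_nonneg {M : Matrix n n ℂ} (hM : M.PosSemidef) : 0 ≤ M.trace.re := by
  rw [Matrix.trace, Complex.re_sum]
  refine Finset.sum_nonneg fun i _ => ?_
  have h := hM.re_dotProduct_nonneg (Pi.single i 1)
  simpa [Matrix.diag, Matrix.mulVec_single, dotProduct, Pi.single_apply] using h

lemma trace_mul_psd_re_nonneg {N Q : Matrix n n ℂ} (hN : N.PosSemidef) (hQ : Q.PosSemidef) :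
    0 ≤ (N * Q).trace.re := by
  have hC : hN.sqrt * hN.sqrt = N := hN.sqrt_mul_self
  have hCH : hN.sqrtᴴ = hN.sqrt := hN.posSemidef_sqrt.1
  have h1 : N * Q = hN.sqrt * (hN.sqrt * Q) := by rw [← Matrix.mul_assoc, hC]
  rw [h1, Matrix.trace_mul_comm]
  have h2 : hN.sqrt * Q * hN.sqrt = hN.sqrt * Q * hN.sqrtᴴ := by rw [hCH]
  exact psd_trace_re_nonneg (h2 ▸ hQ.mul_mul_conjTranspose_same hN.sqrt)

lemma star_mulVec_dot (M : Matrix n n ℂ) (u y : n → ℂ) :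
    star (M *ᵥ u) ⬝ᵥ y = star u ⬝ᵥ (Mᴴ *ᵥ y) := by
  rw [star_mulVec, dotProduct_mulVec]

lemma dot_mulVec_star (M : Matrix n n ℂ) (u y : n → ℂ) :
    star u ⬝ᵥ (M *ᵥ y) = star (Mᴴ *ᵥ u) ⬝ᵥ y := by
  rw [star_mulVec_dot, Matrix.conjTranspose_conjTranspose]

lemma abs_dot_le (x y : n → ℂ) :
    ‖star x ⬝ᵥ y‖ ≤ Real.sqrt ((star x ⬝ᵥ x).re) * Real.sqrt ((star y ⬝ᵥ y).re) := by
  have e : ∀ x y : n → ℂ, inner ℂ ((WithLp.equiv 2 (n → ℂ)).symm x) ((WithLp.equiv 2 (n → ℂ)).symm y) = star x ⬝ᵥ y := by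
    intro x y; rw [dotProduct_comm]; rfl
  have h := norm_inner_le_norm (𝕜 := ℂ) (E := EuclideanSpace ℂ n)
    ((WithLp.equiv 2 _).symm x) ((WithLp.equiv 2 _).symm y)
  have hx : ‖(WithLp.equiv 2 (n → ℂ)).symm x‖ = Real.sqrt ((star x ⬝ᵥ x).re) := by
    rw [norm_eq_sqrt_re_inner (𝕜 := ℂ), e]
    rfl
  have hy : ‖(WithLp.equiv 2 (n → ℂ)).symm y‖ = Real.sqrt ((star y ⬝ᵥ y).re) := by
    rw [norm_eq_sqrt_re_inner (𝕜 := ℂ), e]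
    rfl
  rw [e, hx, hy] at h
  simpa using h

lemma vecMulVec_mul_vecMulVec (x y z t : n → ℂ) :
    vecMulVec x y * vecMulVec z t = (y ⬝ᵥ z) • vecMulVec x t := by
  ext a b
  simp only [Matrix.mul_apply, vecMulVec_apply, Matrix.smul_apply, dotProduct, smul_eq_mul,
    Finset.sum_mul]
  refine Finset.sum_congr rfl fun k _ => by ring

lemma trace_mul_vecMulVec (N : Matrix n n ℂ) (x y : n → ℂ) :
    (N * vecMulVec x y).trace = y ⬝ᵥ (N *ᵥ x) := by
  simp only [Matrix.trace, Matrix.diag, Matrix.mul_apply, vecMulVec_apply, dotProduct,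
    Matrix.mulVec, Finset.mul_sum]
  refine Finset.sum_congr rfl fun k _ => Finset.sum_congr rfl fun l _ => by ring

lemma bessel {N : Matrix n n ℂ} (hN : N.PosSemidef) (w : n → n → ℂ)
    (h1 : ∀ i, w i = 0 ∨ star (w i) ⬝ᵥ w i = 1)
    (h2 : ∀ i j, i ≠ j → star (w i) ⬝ᵥ w j = 0) :
    ∑ i, (star (w i) ⬝ᵥ (N *ᵥ w i)).re ≤ N.trace.re := by
  set P : Matrix n n ℂ := ∑ i, vecMulVec (w i) (star (w i)) with hP
  have hPH : Pᴴ = P := by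
    rw [hP, Matrix.conjTranspose_sum]
    refine Finset.sum_congr rfl fun i _ => ?_
    ext a b
    simp [Matrix.conjTranspose_apply, vecMulVec_apply, mul_comm]
  have hPP : P * P = P := by
    rw [hP, Finset.sum_mul_sum]
    rw [Finset.sum_congr rfl (fun i (_ : i ∈ Finset.univ) => Finset.sum_eq_single i
      (fun j _ hji => by rw [_root_.vecMulVec_mul_vecMulVec, h2 i j (Ne.symm hji), zero_smul])
      (fun h => absurd (Finset.mem_univ i) h))]
    refine Finset.sum_congr rfl fun i _ => ?_
    rw [_root_.vecMulVec_mul_vecMulVec]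
    rcases h1 i with h | h
    · rw [h]
      symm
      ext a b
      simp [vecMulVec_apply]
    · rw [h, one_smul]
  have hQ : ((1 : Matrix n n ℂ) - P).PosSemidef := by
    have key : (1 : Matrix n n ℂ) - P = ((1 : Matrix n n ℂ) - P)ᴴ * ((1 : Matrix n n ℂ) - P) := by
      rw [Matrix.conjTranspose_sub, Matrix.conjTranspose_one, hPH, Matrix.sub_mul,
        Matrix.one_mul, Matrix.mul_sub, Matrix.mul_one, hPP, sub_self, sub_zero]
    rw [key]
    exact posSemidef_conjTranspose_mul_self _
  have htr : (N * P).trace = ∑ i, star (w i) ⬝ᵥ (N *ᵥ w i) := by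
    rw [hP, Finset.mul_sum, Matrix.trace_sum]
    exact Finset.sum_congr rfl fun i _ => trace_mul_vecMulVec N (w i) (star (w i))
  have hsplit : N.trace = (N * P).trace + (N * (1 - P)).trace := by
    rw [← Matrix.trace_add, ← Matrix.mul_add, add_sub_cancel, Matrix.mul_one]
  have hpos := trace_mul_psd_re_nonneg hN hQ
  have hre : (∑ i, star (w i) ⬝ᵥ (N *ᵥ w i)).re = ∑ i, (star (w i) ⬝ᵥ (N *ᵥ w i)).re :=
    Complex.re_sum _ _
  calc ∑ i, (star (w i) ⬝ᵥ (N *ᵥ w i)).re = (N * P).trace.re := by rw [htr, hre]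
    _ ≤ (N * P).trace.re + (N * (1 - P)).trace.re := le_add_of_nonneg_right hpos
    _ = N.trace.re := by rw [hsplit, Complex.add_re]

lemma trace_sqrt_eq {M : Matrix n n ℂ} (hM : M.PosSemidef) :
    hM.sqrt.trace = ∑ i, ((Real.sqrt (hM.1.eigenvalues i) : ℝ) : ℂ) := by
  unfold Matrix.PosSemidef.sqrt
  rw [Matrix.trace_mul_cycle,
    Matrix.mem_unitaryGroup_iff'.mp hM.1.eigenvectorUnitary.2, Matrix.one_mul,
    Matrix.trace_diagonal]
  rfl

lemma fidelity_eq (ρ σ : Matrix n n ℂ) (hρ : ρ.PosSemidef) (hσ : σ.PosSemidef) :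
    fidelity ρ σ = ∑ i, Real.sqrt
      ((posSemidef_conjTranspose_mul_self (hρ.sqrt * hσ.sqrt)).1.eigenvalues i) := by
  have hM := posSemidef_conjTranspose_mul_self (hρ.sqrt * hσ.sqrt)
  rw [fidelity, traceNorm]
  rw [show msqrt ρ = hρ.sqrt from dif_pos hρ, show msqrt σ = hσ.sqrt from dif_pos hσ,
    show msqrt ((hρ.sqrt * hσ.sqrt)ᴴ * (hρ.sqrt * hσ.sqrt)) = hM.sqrt from dif_pos hM,
    trace_sqrt_eq hM, Complex.re_sum]
  exact Finset.sum_congr rfl fun i _ => Complex.ofReal_re _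

lemma fidelity_nonneg (ρ σ : Matrix n n ℂ) (hρ : ρ.PosSemidef) (hσ : σ.PosSemidef) :
    0 ≤ fidelity ρ σ := by
  rw [fidelity_eq ρ σ hρ hσ]
  exact Finset.sum_nonneg fun i _ => Real.sqrt_nonneg _

lemma fidelity_le_bound (ρ σ Λ₁ Λ₂ : Matrix n n ℂ) (hρ : ρ.PosSemidef) (hσ : σ.PosSemidef)
    (hΛ₁ : Λ₁.PosSemidef) (hΛ₂ : Λ₂.PosSemidef) (hsum : Λ₁ + Λ₂ = 1) :
    fidelity ρ σ ≤ Real.sqrt ((Λ₁ * ρ).trace.re) * Real.sqrt ((Λ₁ * σ).trace.re)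
      + Real.sqrt ((Λ₂ * ρ).trace.re) * Real.sqrt ((Λ₂ * σ).trace.re) := by
  set A := hρ.sqrt with hAdef
  set B := hσ.sqrt with hBdef
  set C := hΛ₁.sqrt with hCdef
  set D := hΛ₂.sqrt with hDdef
  have hAH : Aᴴ = A := hρ.posSemidef_sqrt.1
  have hBH : Bᴴ = B := hσ.posSemidef_sqrt.1
  have hCH : Cᴴ = C := hΛ₁.posSemidef_sqrt.1
  have hDH : Dᴴ = D := hΛ₂.posSemidef_sqrt.1
  have hAA : A * A = ρ := hρ.sqrt_mul_self
  have hBB : B * B = σ := hσ.sqrt_mul_self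
  have hCC : C * C = Λ₁ := hΛ₁.sqrt_mul_self
  have hDD : D * D = Λ₂ := hΛ₂.sqrt_mul_self
  set X := A * B with hXdef
  have hM : (Xᴴ * X).PosSemidef := posSemidef_conjTranspose_mul_self X
  set μ : n → ℝ := hM.1.eigenvalues with hμdef
  have hμ0 : ∀ i, 0 ≤ μ i := hM.eigenvalues_nonneg
  set v : n → n → ℂ := fun i => ⇑(hM.1.eigenvectorBasis i) with hvdef
  have hv : ∀ i, (Xᴴ * X) *ᵥ v i = (μ i) • v i := fun i => hM.1.mulVec_eigenvectorBasis i
  have horthv : ∀ i j, star (v i) ⬝ᵥ v j = if i = j then 1 else 0 := by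
    intro i j
    have := orthonormal_iff_ite.mp hM.1.eigenvectorBasis.orthonormal i j
    rw [EuclideanSpace.inner_eq_star_dotProduct, dotProduct_comm] at this
    exact this
  have hXv : ∀ i j, star (X *ᵥ v i) ⬝ᵥ (X *ᵥ v j) = if i = j then ((μ i : ℝ) : ℂ) else 0 := by
    intro i j
    rw [star_mulVec_dot, mulVec_mulVec, hv j, dotProduct_smul, horthv i j]
    by_cases h : i = j
    · subst h; simp [Complex.real_smul]
    · simp [h]
  have hXv0 : ∀ i, μ i = 0 → X *ᵥ v i = 0 := by
    intro i h
    have h2 := hXv i i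
    rw [if_pos rfl, h] at h2
    exact dotProduct_star_self_eq_zero.mp (by simpa using h2)
  set w : n → n → ℂ := fun i => (((Real.sqrt (μ i))⁻¹ : ℝ) : ℂ) • (X *ᵥ v i) with hwdef
  have hws : ∀ i j, star (w i) ⬝ᵥ w j = (((Real.sqrt (μ i))⁻¹ : ℝ) : ℂ)
      * (((Real.sqrt (μ j))⁻¹ : ℝ) : ℂ) * (if i = j then ((μ i : ℝ) : ℂ) else 0) := by
    intro i j
    rw [hwdef]
    simp only [star_smul, smul_dotProduct, dotProduct_smul, smul_eq_mul, RCLike.star_def,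
      Complex.conj_ofReal]
    rw [hXv i j]
    ring
  have h1w : ∀ i, w i = 0 ∨ star (w i) ⬝ᵥ w i = 1 := by
    intro i
    by_cases h : μ i = 0
    · left; rw [hwdef]; simp [hXv0 i h]
    · right
      rw [hws i i, if_pos rfl]
      have hs : Real.sqrt (μ i) ≠ 0 := Real.sqrt_ne_zero'.mpr ((hμ0 i).lt_of_ne (Ne.symm h))
      have hr : ((Real.sqrt (μ i))⁻¹ * (Real.sqrt (μ i))⁻¹ * μ i : ℝ) = 1 := by
        field_simp
        exact (Real.sq_sqrt (hμ0 i)).symm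
      exact_mod_cast congrArg (fun x : ℝ => (x : ℂ)) hr
  have h2w : ∀ i j, i ≠ j → star (w i) ⬝ᵥ w j = 0 := by
    intro i j h
    rw [hws i j, if_neg h, mul_zero]
  have hwa : ∀ i, star (w i) ⬝ᵥ (X *ᵥ v i) = ((Real.sqrt (μ i) : ℝ) : ℂ) := by
    intro i
    rw [hwdef]
    simp only [star_smul, smul_dotProduct, smul_eq_mul, RCLike.star_def, Complex.conj_ofReal]
    rw [hXv i i, if_pos rfl]
    have hr : ((Real.sqrt (μ i))⁻¹ * μ i : ℝ) = Real.sqrt (μ i) := by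
      rcases eq_or_lt_of_le (hμ0 i) with h | h
      · rw [← h]; simp
      · have hs : Real.sqrt (μ i) ≠ 0 := Real.sqrt_ne_zero'.mpr h
        field_simp
        exact (Real.sq_sqrt (hμ0 i)).symm
    exact_mod_cast congrArg (fun x : ℝ => (x : ℂ)) hr
  set a : n → n → ℂ := fun i => (C * A) *ᵥ w i with hadef
  set b : n → n → ℂ := fun i => (C * B) *ᵥ v i with hbdef
  set a' : n → n → ℂ := fun i => (D * A) *ᵥ w i with ha'def
  set b' : n → n → ℂ := fun i => (D * B) *ᵥ v i with hb'def
  have hsplitX : X = (A * C) * (C * B) + (A * D) * (D * B) := by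
    have e : (A * C) * (C * B) + (A * D) * (D * B) = A * (C * C + D * D) * B := by
      noncomm_ring
    rw [e, hCC, hDD, hsum, Matrix.mul_one]
  have hdecomp : ∀ i, star (w i) ⬝ᵥ (X *ᵥ v i) = star (a i) ⬝ᵥ b i + star (a' i) ⬝ᵥ b' i := by
    intro i
    conv_lhs => rw [hsplitX]
    rw [Matrix.add_mulVec, dotProduct_add]
    congr 1
    · rw [← mulVec_mulVec, dot_mulVec_star, Matrix.conjTranspose_mul, hAH, hCH]
    · rw [← mulVec_mulVec, dot_mulVec_star, Matrix.conjTranspose_mul, hAH, hDH]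
  set α : n → ℝ := fun i => (star (a i) ⬝ᵥ a i).re with hαdef
  set β : n → ℝ := fun i => (star (b i) ⬝ᵥ b i).re with hβdef
  set α' : n → ℝ := fun i => (star (a' i) ⬝ᵥ a' i).re with hα'def
  set β' : n → ℝ := fun i => (star (b' i) ⬝ᵥ b' i).re with hβ'def
  have hkey : ∀ i, Real.sqrt (μ i) ≤ Real.sqrt (α i) * Real.sqrt (β i)
      + Real.sqrt (α' i) * Real.sqrt (β' i) := by
    intro i
    have h0 : Real.sqrt (μ i) = (star (w i) ⬝ᵥ (X *ᵥ v i)).re := by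
      rw [hwa i, Complex.ofReal_re]
    rw [h0, hdecomp i, Complex.add_re]
    have l1 : (star (a i) ⬝ᵥ b i).re ≤ Real.sqrt (α i) * Real.sqrt (β i) :=
      (Complex.re_le_norm _).trans (abs_dot_le _ _)
    have l2 : (star (a' i) ⬝ᵥ b' i).re ≤ Real.sqrt (α' i) * Real.sqrt (β' i) :=
      (Complex.re_le_norm _).trans (abs_dot_le _ _)
    linarith
  have quad_shift : ∀ (R : Matrix n n ℂ) (u : n → ℂ),
      star (R *ᵥ u) ⬝ᵥ (R *ᵥ u) = star u ⬝ᵥ ((Rᴴ * R) *ᵥ u) := by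
    intro R u
    rw [star_mulVec_dot, mulVec_mulVec]
  have trace_CA : ((C * A)ᴴ * (C * A)).trace = (Λ₁ * ρ).trace := by
    rw [Matrix.conjTranspose_mul, hAH, hCH,
      show (A * C) * (C * A) = A * (Λ₁ * A) from by rw [← hCC]; noncomm_ring,
      Matrix.trace_mul_comm, Matrix.mul_assoc, hAA]
  have trace_CB : ((C * B)ᴴ * (C * B)).trace = (Λ₁ * σ).trace := by
    rw [Matrix.conjTranspose_mul, hBH, hCH,
      show (B * C) * (C * B) = B * (Λ₁ * B) from by rw [← hCC]; noncomm_ring,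
      Matrix.trace_mul_comm, Matrix.mul_assoc, hBB]
  have trace_DA : ((D * A)ᴴ * (D * A)).trace = (Λ₂ * ρ).trace := by
    rw [Matrix.conjTranspose_mul, hAH, hDH,
      show (A * D) * (D * A) = A * (Λ₂ * A) from by rw [← hDD]; noncomm_ring,
      Matrix.trace_mul_comm, Matrix.mul_assoc, hAA]
  have trace_DB : ((D * B)ᴴ * (D * B)).trace = (Λ₂ * σ).trace := by
    rw [Matrix.conjTranspose_mul, hBH, hDH,
      show (B * D) * (D * B) = B * (Λ₂ * B) from by rw [← hDD]; noncomm_ring,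
      Matrix.trace_mul_comm, Matrix.mul_assoc, hBB]
  have h1v : ∀ i, v i = 0 ∨ star (v i) ⬝ᵥ v i = 1 := fun i =>
    Or.inr (by rw [horthv i i, if_pos rfl])
  have h2v : ∀ i j, i ≠ j → star (v i) ⬝ᵥ v j = 0 := fun i j h => by
    rw [horthv i j, if_neg h]
  have hαsum : ∑ i, α i ≤ ((Λ₁ * ρ).trace).re := by
    calc ∑ i, α i = ∑ i, (star (w i) ⬝ᵥ (((C * A)ᴴ * (C * A)) *ᵥ w i)).re :=
          Finset.sum_congr rfl fun i _ => by rw [hαdef]; simp only; rw [quad_shift]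
      _ ≤ ((C * A)ᴴ * (C * A)).trace.re := bessel (posSemidef_conjTranspose_mul_self _) w h1w h2w
      _ = ((Λ₁ * ρ).trace).re := by rw [trace_CA]
  have hα'sum : ∑ i, α' i ≤ ((Λ₂ * ρ).trace).re := by
    calc ∑ i, α' i = ∑ i, (star (w i) ⬝ᵥ (((D * A)ᴴ * (D * A)) *ᵥ w i)).re :=
          Finset.sum_congr rfl fun i _ => by rw [hα'def]; simp only; rw [quad_shift]
      _ ≤ ((D * A)ᴴ * (D * A)).trace.re := bessel (posSemidef_conjTranspose_mul_self _) w h1w h2w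
      _ = ((Λ₂ * ρ).trace).re := by rw [trace_DA]
  have hβsum : ∑ i, β i ≤ ((Λ₁ * σ).trace).re := by
    calc ∑ i, β i = ∑ i, (star (v i) ⬝ᵥ (((C * B)ᴴ * (C * B)) *ᵥ v i)).re :=
          Finset.sum_congr rfl fun i _ => by rw [hβdef]; simp only; rw [quad_shift]
      _ ≤ ((C * B)ᴴ * (C * B)).trace.re := bessel (posSemidef_conjTranspose_mul_self _) v h1v h2v
      _ = ((Λ₁ * σ).trace).re := by rw [trace_CB]
  have hβ'sum : ∑ i, β' i ≤ ((Λ₂ * σ).trace).re := by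
    calc ∑ i, β' i = ∑ i, (star (v i) ⬝ᵥ (((D * B)ᴴ * (D * B)) *ᵥ v i)).re :=
          Finset.sum_congr rfl fun i _ => by rw [hβ'def]; simp only; rw [quad_shift]
      _ ≤ ((D * B)ᴴ * (D * B)).trace.re := bessel (posSemidef_conjTranspose_mul_self _) v h1v h2v
      _ = ((Λ₂ * σ).trace).re := by rw [trace_DB]
  have hα0 : ∀ i, 0 ≤ α i := fun i => dot_star_self_re_nonneg _
  have hβ0 : ∀ i, 0 ≤ β i := fun i => dot_star_self_re_nonneg _
  have hα'0 : ∀ i, 0 ≤ α' i := fun i => dot_star_self_re_nonneg _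
  have hβ'0 : ∀ i, 0 ≤ β' i := fun i => dot_star_self_re_nonneg _
  have hF : fidelity ρ σ = ∑ i, Real.sqrt (μ i) := fidelity_eq ρ σ hρ hσ
  rw [hF]
  calc ∑ i, Real.sqrt (μ i)
      ≤ ∑ i, (Real.sqrt (α i) * Real.sqrt (β i) + Real.sqrt (α' i) * Real.sqrt (β' i)) :=
        Finset.sum_le_sum fun i _ => hkey i
    _ = (∑ i, Real.sqrt (α i) * Real.sqrt (β i))
        + ∑ i, Real.sqrt (α' i) * Real.sqrt (β' i) := Finset.sum_add_distrib
    _ ≤ Real.sqrt (∑ i, α i) * Real.sqrt (∑ i, β i)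
        + Real.sqrt (∑ i, α' i) * Real.sqrt (∑ i, β' i) :=
        add_le_add (Real.sum_sqrt_mul_sqrt_le _ hα0 hβ0) (Real.sum_sqrt_mul_sqrt_le _ hα'0 hβ'0)
    _ ≤ Real.sqrt ((Λ₁ * ρ).trace.re) * Real.sqrt ((Λ₁ * σ).trace.re)
        + Real.sqrt ((Λ₂ * ρ).trace.re) * Real.sqrt ((Λ₂ * σ).trace.re) := by
        gcongr

end aux

open Matrix ComplexOrder in
/-- `|√(Tr(Λρ)) − √(Tr(Λσ))| ≤ P(ρ,σ)` for density matrices `ρ, σ` and `0 ≤ Λ ≤ I`. -/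
theorem sqrt_trace_diff_le_purifiedDist {n : Type*} [Fintype n] [DecidableEq n]
    (ρ σ Λ : Matrix n n ℂ) (hρ : IsDensityMatrix ρ) (hσ : IsDensityMatrix σ)
    (hΛ : Λ.PosSemidef) (hΛ1 : ((1 : Matrix n n ℂ) - Λ).PosSemidef) :
    |Real.sqrt ((Λ * ρ).trace.re) - Real.sqrt ((Λ * σ).trace.re)| ≤ purifiedDist ρ σ := by
  
  obtain ⟨hρp, hρt⟩ := hρ
  obtain ⟨hσp, hσt⟩ := hσ
  have hsum : Λ + ((1 : Matrix n n ℂ) - Λ) = 1 := by abel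
  have hp0 : 0 ≤ (Λ * ρ).trace.re := trace_mul_psd_re_nonneg hΛ hρp
  have hq0 : 0 ≤ (Λ * σ).trace.re := trace_mul_psd_re_nonneg hΛ hσp
  have hp'0 : 0 ≤ (((1 : Matrix n n ℂ) - Λ) * ρ).trace.re := trace_mul_psd_re_nonneg hΛ1 hρp
  have hq'0 : 0 ≤ (((1 : Matrix n n ℂ) - Λ) * σ).trace.re := trace_mul_psd_re_nonneg hΛ1 hσp
  have hpp : (Λ * ρ).trace.re + (((1 : Matrix n n ℂ) - Λ) * ρ).trace.re = 1 := by
    have h : (Λ * ρ).trace + (((1 : Matrix n n ℂ) - Λ) * ρ).trace = 1 := by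
      rw [← Matrix.trace_add, ← Matrix.add_mul, hsum, Matrix.one_mul, hρt]
    calc (Λ * ρ).trace.re + (((1 : Matrix n n ℂ) - Λ) * ρ).trace.re
        = ((Λ * ρ).trace + (((1 : Matrix n n ℂ) - Λ) * ρ).trace).re := (Complex.add_re _ _).symm
      _ = 1 := by rw [h]; simp
  have hqq : (Λ * σ).trace.re + (((1 : Matrix n n ℂ) - Λ) * σ).trace.re = 1 := by
    have h : (Λ * σ).trace + (((1 : Matrix n n ℂ) - Λ) * σ).trace = 1 := by
      rw [← Matrix.trace_add, ← Matrix.add_mul, hsum, Matrix.one_mul, hσt]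
    calc (Λ * σ).trace.re + (((1 : Matrix n n ℂ) - Λ) * σ).trace.re
        = ((Λ * σ).trace + (((1 : Matrix n n ℂ) - Λ) * σ).trace).re := (Complex.add_re _ _).symm
      _ = 1 := by rw [h]; simp
  have hFb := fidelity_le_bound ρ σ Λ ((1 : Matrix n n ℂ) - Λ) hρp hσp hΛ hΛ1 hsum
  have hF0 := fidelity_nonneg ρ σ hρp hσp
  rw [purifiedDist]
  apply Real.abs_le_sqrt
  set p := (Λ * ρ).trace.re
  set q := (Λ * σ).trace.re
  set p' := (((1 : Matrix n n ℂ) - Λ) * ρ).trace.re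
  set q' := (((1 : Matrix n n ℂ) - Λ) * σ).trace.re
  set F := fidelity ρ σ
  have hsp := Real.sq_sqrt hp0
  have hsq := Real.sq_sqrt hq0
  have hsp' := Real.sq_sqrt hp'0
  have hsq' := Real.sq_sqrt hq'0
  have c0 : 0 ≤ Real.sqrt p * Real.sqrt q := by positivity
  have s0 : 0 ≤ Real.sqrt p' * Real.sqrt q' := by positivity
  have hc2 : (Real.sqrt p * Real.sqrt q) ^ 2 = p * q := by rw [mul_pow, hsp, hsq]
  have hs2 : (Real.sqrt p' * Real.sqrt q') ^ 2 = p' * q' := by rw [mul_pow, hsp', hsq']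
  have hG2 : (Real.sqrt p * Real.sqrt q + Real.sqrt p' * Real.sqrt q') ^ 2 ≤ 1 := by
    nlinarith [sq_nonneg (Real.sqrt p * Real.sqrt q' - Real.sqrt p' * Real.sqrt q),
      Real.sqrt_nonneg p, Real.sqrt_nonneg q, Real.sqrt_nonneg p', Real.sqrt_nonneg q']
  have hG1 : Real.sqrt p * Real.sqrt q + Real.sqrt p' * Real.sqrt q' ≤ 1 := by nlinarith
  have hF2 : F ^ 2 ≤ (Real.sqrt p * Real.sqrt q + Real.sqrt p' * Real.sqrt q') ^ 2 :=
    pow_le_pow_left₀ hF0 hFb 2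
  have key : 0 ≤ (Real.sqrt p * Real.sqrt q)
      * (1 - (Real.sqrt p * Real.sqrt q + Real.sqrt p' * Real.sqrt q')) :=
    mul_nonneg c0 (by linarith)
  nlinarith [hF2, key, hc2, hs2]
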